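/- Let (X_n, Z_n), n = 1, 2, ..., be a sequence of pairs of real-valued random variables, where each X_n has support equal to a finite set 𝒳_n with 2 ≤ |𝒳_n| ≤ K for a constant K independent of n, and each X_n has finite positive variance. Define X̆_n = X_n · V[X_n]^{-1/2}, with support 𝒳̆_n ⊂ ℝ, let ε*_n be one half of the minimum distance between any two distinct points of 𝒳̆_n, and suppose ε* = inf_n ε*_n > 0. If ν(X_n | Z_n) → 0 as n → ∞, then H(X_n | Z_n) → 0 and H(X_n) − I(X_n ; Z_n) → 0 as n → ∞. -/

import Mathlib

open MeasureTheory ProbabilityTheory Real Filter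

/-- Conditional mean `E[Z | σ(X)]`. -/
noncomputable def condMean {Ω β : Type*} [MeasurableSpace Ω] [MeasurableSpace β]
    (μ : Measure Ω) (Z : Ω → ℝ) (X : Ω → β) : Ω → ℝ :=
  μ[Z | MeasurableSpace.comap X inferInstance]

/-- `ν(X|Z) = E{V[X|Z]}/V[X] = E[(X − E[X|Z])²] / V[X]`. -/
noncomputable def nuScalar {Ω β : Type*} [MeasurableSpace Ω] [MeasurableSpace β]
    (μ : Measure Ω) (X : Ω → ℝ) (Z : Ω → β) : ℝ :=
  (∫ ω, (X ω - condMean μ X Z ω) ^ 2 ∂μ) / variance X μ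

/-- Discrete (Shannon) entropy of `X`, whose support is the finite set `S`. -/
noncomputable def finEntropy {Ω : Type*} [MeasurableSpace Ω] (μ : Measure Ω)
    (X : Ω → ℝ) (S : Finset ℝ) : ℝ :=
  ∑ x ∈ S, Real.negMulLog (μ (X ⁻¹' {x})).toReal

/-- Conditional entropy `H(X|Z)` of the finitely supported `X` given the real-valued `Z`,
defined via the regular conditional distribution of `X` given `Z`. -/
noncomputable def finCondEntropy {Ω : Type*} [MeasurableSpace Ω] (μ : Measure Ω)
    [IsFiniteMeasure μ] (X Z : Ω → ℝ) (S : Finset ℝ) : ℝ :=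
  ∫ z, ∑ x ∈ S, Real.negMulLog ((condDistrib X Z μ z) {x}).toReal ∂(Measure.map Z μ)

/-- Mutual information `I(X;Z) = H(X) − H(X|Z)` for finitely supported `X`. -/
noncomputable def finMutualInfo {Ω : Type*} [MeasurableSpace Ω] (μ : Measure Ω)
    [IsFiniteMeasure μ] (X Z : Ω → ℝ) (S : Finset ℝ) : ℝ :=
  finEntropy μ X S - finCondEntropy μ X Z S

lemma aux_negMulLog_le {p b : ℝ} (h0 : 0 ≤ p) (h1 : p ≤ 1) (hb : p * (1 - p) ≤ b) :
    Real.negMulLog p ≤ 2 * Real.sqrt (Real.sqrt b) := by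
  have hbnn : 0 ≤ b := le_trans (mul_nonneg h0 (by linarith)) hb
  rcases eq_or_lt_of_le h0 with h | hp
  · rw [← h, Real.negMulLog_zero]
    positivity
  rcases le_or_gt p (1/2) with hp2 | hp2
  · have hsp : 0 < Real.sqrt p := Real.sqrt_pos.2 hp
    have hlog : -Real.log p ≤ 2 / Real.sqrt p := by
      have ha : Real.log (1 / Real.sqrt p) ≤ 1 / Real.sqrt p - 1 :=
        Real.log_le_sub_one_of_pos (by positivity)
      have hb2 : Real.log (1 / Real.sqrt p) = -(Real.log p / 2) := by
        rw [one_div, Real.log_inv, Real.log_sqrt h0]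
      have hc : 2 / Real.sqrt p = 2 * (1 / Real.sqrt p) := by ring
      rw [hc]; linarith
    have hstep : Real.negMulLog p ≤ 2 * Real.sqrt p := by
      have hrw : Real.negMulLog p = p * (-Real.log p) := by
        rw [Real.negMulLog]; ring
      rw [hrw]
      calc p * (-Real.log p) ≤ p * (2 / Real.sqrt p) :=
            mul_le_mul_of_nonneg_left hlog h0
        _ = 2 * (p / Real.sqrt p) := by ring
        _ = 2 * Real.sqrt p := by rw [Real.div_sqrt]
    have hpb : p ≤ Real.sqrt b := by
      rw [Real.le_sqrt h0 hbnn]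
      nlinarith
    have : Real.sqrt p ≤ Real.sqrt (Real.sqrt b) := Real.sqrt_le_sqrt hpb
    linarith
  · have hstep : Real.negMulLog p ≤ 2 * (1 - p) := by
      have hlog : -Real.log p ≤ p⁻¹ - 1 := by
        have ha : Real.log p⁻¹ ≤ p⁻¹ - 1 := Real.log_le_sub_one_of_pos (by positivity)
        rwa [Real.log_inv] at ha
      have h2 : Real.negMulLog p = p * (-Real.log p) := by
        rw [Real.negMulLog]; ring
      have h3 : p * (-Real.log p) ≤ p * (p⁻¹ - 1) :=
        mul_le_mul_of_nonneg_left hlog h0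
      have h4 : p * (p⁻¹ - 1) = 1 - p := by field_simp
      nlinarith
    have h5 : 1 - p ≤ Real.sqrt b := by
      rw [Real.le_sqrt (by linarith) hbnn]
      nlinarith
    have h6 : 1 - p ≤ Real.sqrt (Real.sqrt b) := by
      rw [Real.le_sqrt (by linarith) (Real.sqrt_nonneg b)]
      nlinarith [Real.sqrt_nonneg b]
    linarith

lemma aux_split {x δ : ℝ} (hx0 : 0 ≤ x) (hx1 : x ≤ 1) (hδ : 0 < δ) :
    Real.sqrt (Real.sqrt x) ≤ Real.sqrt (Real.sqrt δ) + x / δ := by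
  rcases le_or_gt x δ with h | h
  · have h1 : Real.sqrt (Real.sqrt x) ≤ Real.sqrt (Real.sqrt δ) :=
      Real.sqrt_le_sqrt (Real.sqrt_le_sqrt h)
    have h2 : (0:ℝ) ≤ x / δ := by positivity
    linarith
  · have h1 : Real.sqrt (Real.sqrt x) ≤ 1 := by
      rw [show (1:ℝ) = Real.sqrt (Real.sqrt 1) by simp]
      exact Real.sqrt_le_sqrt (Real.sqrt_le_sqrt hx1)
    have h2 : (1:ℝ) ≤ x / δ := (one_le_div hδ).2 h.le
    have h3 : 0 ≤ Real.sqrt (Real.sqrt δ) := Real.sqrt_nonneg _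
    linarith

lemma meas_finset_eq_sum (ν : MeasureTheory.Measure ℝ) (A : Finset ℝ) :
    ν ↑A = ∑ x ∈ A, ν {x} := by
  simpa using (sum_measure_preimage_singleton (f := (id : ℝ → ℝ)) (μ := ν) A
    (fun y _ => measurableSet_singleton y)).symm

section Key

variable {Ω : Type*} [MeasurableSpace Ω] (μ : Measure Ω) [IsProbabilityMeasure μ]
    (X Z : Ω → ℝ) (S : Finset ℝ)

lemma finCondEntropy_nonneg : 0 ≤ finCondEntropy μ X Z S := by
  refine integral_nonneg fun z => Finset.sum_nonneg fun x _ => Real.negMulLog_nonneg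
    ENNReal.toReal_nonneg ?_
  simpa using ENNReal.toReal_mono ENNReal.one_ne_top
    (prob_le_one (μ := condDistrib X Z μ z) (s := {x}))

set_option maxHeartbeats 1600000 in
lemma key_bound {K : ℕ}
    (hX : Measurable X) (hZ : Measurable Z)
    (hSne : S.Nonempty) (hK : S.card ≤ K)
    (hsupp : μ (X ⁻¹' ↑S) = 1)
    (hXL2 : MemLp X 2 μ) (hvar : 0 < variance X μ)
    {ε : ℝ} (hε : 0 < ε)
    (hsep : ∀ x ∈ S, ∀ y ∈ S, x ≠ y →
      2 * ε ≤ |x / Real.sqrt (variance X μ) - y / Real.sqrt (variance X μ)|)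
    {δ : ℝ} (hδ : 0 < δ) :
    finCondEntropy μ X Z S ≤
      2 * K * Real.sqrt (Real.sqrt δ) + 2 * K * K / (δ * ε ^ 2) * nuScalar μ X Z := by
  have hKcard : 0 < S.card := Finset.card_pos.2 hSne
  have hKpos : (0:ℝ) < K := by exact_mod_cast lt_of_lt_of_le hKcard hK
  set κ := condDistrib X Z μ with hκdef
  set ρ := Measure.map Z μ with hρdef
  haveI hρprob : IsProbabilityMeasure ρ := Measure.isProbabilityMeasure_map hZ.aemeasurable
  set q : ℝ → ℝ → ℝ := fun z x => ((κ z) {x}).toReal with hqdef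
  set D : ℝ → ℝ := fun z => ∑ x ∈ S, q z x * (1 - q z x) with hDdef
  set G : ℝ → ℝ := fun z => ∑ x ∈ S, x * q z x with hGdef
  set V := variance X μ with hVdef
  set s := Real.sqrt V with hsdef
  have hs : 0 < s := Real.sqrt_pos.2 hvar
  have hs2 : s ^ 2 = V := Real.sq_sqrt (variance_nonneg X μ)
  -- basic bounds on q
  have hq0 : ∀ z x, 0 ≤ q z x := fun z x => ENNReal.toReal_nonneg
  have hq1 : ∀ z x, q z x ≤ 1 := fun z x => by
    simpa using ENNReal.toReal_mono ENNReal.one_ne_top (prob_le_one (μ := κ z) (s := {x}))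
  have hqmeas : ∀ x, Measurable fun z => q z x := fun x =>
    (Kernel.measurable_coe _ (measurableSet_singleton x)).ennreal_toReal
  have hSmeas : MeasurableSet (↑S : Set ℝ) := S.measurableSet
  have hsumS : ∀ z, (κ z) ↑S = ∑ x ∈ S, (κ z) {x} := fun z => meas_finset_eq_sum _ S
  have hDsum : ∀ z, ∑ x ∈ S, q z x = ((κ z) ↑S).toReal := fun z => by
    rw [hsumS z, ENNReal.toReal_sum (fun x _ => measure_ne_top _ _)]
  have hD0 : ∀ z, 0 ≤ D z := fun z =>
    Finset.sum_nonneg fun x _ => mul_nonneg (hq0 z x) (by linarith [hq1 z x])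
  have hD1 : ∀ z, D z ≤ 1 := by
    intro z
    have h1 : D z ≤ ∑ x ∈ S, q z x :=
      Finset.sum_le_sum fun x _ => by nlinarith [hq0 z x, hq1 z x]
    have h2 : ((κ z) ↑S).toReal ≤ 1 := by
      simpa using ENNReal.toReal_mono ENNReal.one_ne_top (prob_le_one (μ := κ z) (s := ↑S))
    rw [hDsum z] at h1; linarith
  have hDmeas : Measurable D :=
    Finset.measurable_sum _ fun x _ => ((hqmeas x).mul ((hqmeas x).const_sub 1))
  have hDint : Integrable D ρ := by
    refine (integrable_const (1:ℝ)).mono' hDmeas.aestronglyMeasurable ?_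
    exact ae_of_all _ fun z => by rw [Real.norm_eq_abs, abs_of_nonneg (hD0 z)]; exact hD1 z
  -- a.e. the kernel is supported on S
  have hcompl0 : ∀ᵐ z ∂ρ, (κ z) (↑S)ᶜ = 0 := by
    have hXc : μ (X ⁻¹' (↑S)ᶜ) = 0 := by
      rw [Set.preimage_compl, measure_compl (hX hSmeas) (measure_ne_top _ _), hsupp,
        measure_univ, tsub_self]
    have hlz : ∫⁻ z, (κ z) (↑S)ᶜ ∂ρ = 0 := by
      rw [hρdef, lintegral_map (Kernel.measurable_coe κ hSmeas.compl) hZ]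
      have h := setLIntegral_preimage_condDistrib (μ := μ) (X := Z) (Y := X) hZ
        hX.aemeasurable hSmeas.compl MeasurableSet.univ
      simp only [Set.preimage_univ, Measure.restrict_univ, Set.univ_inter] at h
      rw [← hκdef] at h
      rw [h, hXc]
    have := (lintegral_eq_zero_iff (Kernel.measurable_coe κ hSmeas.compl)).1 hlz
    filter_upwards [this] with z hz using hz
  have hae1 : ∀ᵐ z ∂ρ, (κ z) ↑S = 1 := by
    filter_upwards [hcompl0] with z hz
    exact (prob_compl_eq_zero_iff hSmeas).1 hz
  have hsum1 : ∀ᵐ z ∂ρ, ∑ x ∈ S, q z x = 1 := by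
    filter_upwards [hae1] with z hz
    rw [hDsum z, hz, ENNReal.toReal_one]
  -- G is the conditional mean
  have hGmeas : Measurable G := Finset.measurable_sum _ fun x _ => (hqmeas x).const_mul x
  have hGbd : ∀ z, |G z| ≤ ∑ x ∈ S, |x| := by
    intro z
    refine (Finset.abs_sum_le_sum_abs _ _).trans (Finset.sum_le_sum fun x _ => ?_)
    rw [abs_mul]
    nlinarith [abs_nonneg x, hq0 z x, hq1 z x, abs_of_nonneg (hq0 z x)]
  have hGL2 : MemLp (fun ω => G (Z ω)) 2 μ := by
    refine MemLp.of_bound ((hGmeas.comp hZ).aestronglyMeasurable) (∑ x ∈ S, |x|)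
      (ae_of_all _ fun ω => ?_)
    rw [Real.norm_eq_abs]; exact hGbd (Z ω)
  have hIntSq : Integrable (fun ω => (X ω - G (Z ω)) ^ 2) μ := by
    have := (hXL2.sub hGL2).integrable_sq
    simpa [Pi.sub_apply] using this
  have hcondmean : condMean μ X Z =ᵐ[μ] fun ω => G (Z ω) := by
    have step1 : μ[X | MeasurableSpace.comap Z inferInstance] =ᵐ[μ]
        fun a => ∫ y, y ∂κ (Z a) :=
      condExp_ae_eq_integral_condDistrib' (X := Z) (Y := X) hZ (hXL2.integrable one_le_two)
    have step2 : ∀ᵐ z ∂ρ, (∫ y, y ∂κ z) = G z := by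
      filter_upwards [hcompl0] with z hz
      have hmem : ∀ᵐ x ∂κ z, x ∈ (↑S : Set ℝ) := by
        rw [ae_iff]
        convert hz using 2
        rfl
      have hres : (κ z).restrict ↑S = κ z := Measure.restrict_eq_self_of_ae_mem hmem
      have hIntOn : IntegrableOn (fun y : ℝ => y) ↑S (κ z) := by
        refine (integrable_const (S.sup' hSne (fun x => |x|))).mono'
          measurable_id.aestronglyMeasurable ?_
        filter_upwards [ae_restrict_mem hSmeas] with x hx
        rw [Real.norm_eq_abs]
        exact Finset.le_sup' (fun x => |x|) (Finset.mem_coe.1 hx)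
      rw [← hres, integral_finset S _]
      simp only [smul_eq_mul, hGdef]
      exact Finset.sum_congr rfl fun x _ => by rw [mul_comm]; rfl
      exact hIntOn
    have step3 : ∀ᵐ ω ∂μ, (∫ y, y ∂κ (Z ω)) = G (Z ω) :=
      ae_of_ae_map hZ.aemeasurable step2
    exact step1.trans step3
  -- separation in unstandardized form
  have hsep' : ∀ x ∈ S, ∀ y ∈ S, x ≠ y → 2 * ε * s ≤ |x - y| := by
    intro x hx y hy hxy
    have h := hsep x hx y hy hxy
    rw [div_sub_div_same, abs_div, abs_of_pos hs] at h
    calc 2 * ε * s = (2 * ε) * s := by ring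
      _ ≤ (|x - y| / s) * s := mul_le_mul_of_nonneg_right h hs.le
      _ = |x - y| := by field_simp
  -- the nuScalar quantity
  set m := ∫ ω, (X ω - condMean μ X Z ω) ^ 2 ∂μ with hmdef
  have hm0 : 0 ≤ m := integral_nonneg fun ω => sq_nonneg _
  have hnu : nuScalar μ X Z = m / V := rfl
  have hmrw : m = ∫ ω, (X ω - G (Z ω)) ^ 2 ∂μ := by
    refine integral_congr_ae ?_
    filter_upwards [hcondmean] with ω h
    rw [h]
  -- lintegral disintegration
  set F : ℝ × ℝ → ENNReal := fun p => ENNReal.ofReal ((p.2 - G p.1) ^ 2) with hFdef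
  have hFmeas : Measurable F :=
    ((measurable_snd.sub (hGmeas.comp measurable_fst)).pow_const 2).ennreal_ofReal
  haveI : IsProbabilityMeasure (μ.map fun ω => (Z ω, X ω)) :=
    Measure.isProbabilityMeasure_map (hZ.prodMk hX).aemeasurable
  have hdis : ρ.compProd κ = μ.map (fun ω => (Z ω, X ω)) := by
    rw [hρdef, hκdef]
    exact compProd_map_condDistrib hX.aemeasurable
  have hlhs : ENNReal.ofReal m = ∫⁻ z, ∫⁻ x, F (z, x) ∂κ z ∂ρ := by
    rw [hmrw, ofReal_integral_eq_lintegral_ofReal hIntSq (ae_of_all _ fun ω => sq_nonneg _),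
      ← Measure.lintegral_compProd hFmeas, hdis,
      lintegral_map hFmeas (hZ.prodMk hX)]
  -- pointwise (a.e.) lower bound on the inner lintegral
  have hz_bound : ∀ᵐ z ∂ρ, ENNReal.ofReal (ε ^ 2 * V / K) * ENNReal.ofReal (D z)
      ≤ ∫⁻ x, F (z, x) ∂κ z := by
    filter_upwards [hsum1] with z hsz
    obtain ⟨x₀, hx₀S, hx₀max⟩ := Finset.exists_max_image S (fun x => q z x) hSne
    set T := S.filter (fun x => ε * s ≤ |x - G z|) with hTdef
    have hTsub : T ⊆ S := Finset.filter_subset _ _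
    have hsingle : ∀ a ∈ S \ T, ∀ b ∈ S \ T, a = b := by
      intro a ha b hb
      by_contra hne
      rw [Finset.mem_sdiff, hTdef, Finset.mem_filter] at ha hb
      have ha2 : |a - G z| < ε * s := by
        by_contra h; exact ha.2 ⟨ha.1, not_lt.1 h⟩
      have hb2 : |b - G z| < ε * s := by
        by_contra h; exact hb.2 ⟨hb.1, not_lt.1 h⟩
      have := hsep' a ha.1 b hb.1 hne
      have htri : |a - b| ≤ |a - G z| + |b - G z| := by
        calc |a - b| ≤ |a - G z| + |G z - b| := abs_sub_le a (G z) b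
          _ = |a - G z| + |b - G z| := by rw [abs_sub_comm (G z) b]
      linarith
    have hT1 : ∑ x ∈ S \ T, q z x ≤ q z x₀ := by
      rcases Finset.eq_empty_or_nonempty (S \ T) with he | ⟨a, ha⟩
      · rw [he, Finset.sum_empty]; exact hq0 z x₀
      · have : S \ T = {a} := by
          refine Finset.eq_singleton_iff_unique_mem.2 ⟨ha, fun b hb => hsingle b hb a ha⟩
        rw [this, Finset.sum_singleton]
        exact hx₀max a (Finset.mem_sdiff.1 ha).1
    have hT2 : 1 - q z x₀ ≤ ∑ x ∈ T, q z x := by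
      have := Finset.sum_sdiff_eq_sub (f := fun x => q z x) hTsub
      -- ∑_{S\T} = ∑_S - ∑_T
      rw [hsz] at this
      linarith
    have hDle : D z ≤ K * (1 - q z x₀) := by
      have hterm : ∀ x ∈ S, q z x * (1 - q z x) ≤ 1 - q z x₀ := by
        intro x hx
        rcases eq_or_ne x x₀ with rfl | hne
        · nlinarith [hq0 z x, hq1 z x]
        · have hqx : q z x ≤ 1 - q z x₀ := by
            have h1 : q z x₀ + ∑ y ∈ S.erase x₀, q z y = 1 := by
              rw [Finset.add_sum_erase S (fun y => q z y) hx₀S]; exact hsz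
            have h2 : q z x ≤ ∑ y ∈ S.erase x₀, q z y :=
              Finset.single_le_sum (fun y _ => hq0 z y) (Finset.mem_erase.2 ⟨hne, hx⟩)
            linarith
          nlinarith [hq0 z x, hq1 z x]
      calc D z ≤ S.card • (1 - q z x₀) := Finset.sum_le_card_nsmul _ _ _ hterm
        _ = (S.card : ℝ) * (1 - q z x₀) := nsmul_eq_mul _ _
        _ ≤ K * (1 - q z x₀) := by
            have hq : 0 ≤ 1 - q z x₀ := by linarith [hq1 z x₀]
            have : (S.card : ℝ) ≤ K := by exact_mod_cast hK
            nlinarith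
    -- lower bound the lintegral over T
    have hTmeas : MeasurableSet (↑T : Set ℝ) := T.measurableSet
    have hstep1 : ENNReal.ofReal (ε ^ 2 * V) * (κ z) ↑T ≤ ∫⁻ x, F (z, x) ∂κ z := by
      calc ENNReal.ofReal (ε ^ 2 * V) * (κ z) ↑T
          = ∫⁻ _ in (↑T : Set ℝ), ENNReal.ofReal (ε ^ 2 * V) ∂κ z := (setLIntegral_const _ _).symm
        _ ≤ ∫⁻ x in (↑T : Set ℝ), F (z, x) ∂κ z := by
            refine setLIntegral_mono' hTmeas fun x hx => ?_
            rw [Finset.mem_coe, hTdef, Finset.mem_filter] at hx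
            refine ENNReal.ofReal_le_ofReal ?_
            have h1 : (ε * s) ^ 2 ≤ |x - G z| ^ 2 :=
              pow_le_pow_left₀ (by positivity) hx.2 2
            rw [sq_abs] at h1
            calc ε ^ 2 * V = (ε * s) ^ 2 := by rw [mul_pow, hs2]
              _ ≤ (x - G z) ^ 2 := h1
        _ ≤ ∫⁻ x, F (z, x) ∂κ z := setLIntegral_le_lintegral _ _
    have hstep2 : ENNReal.ofReal (D z / K) ≤ (κ z) ↑T := by
      have hTval : ((κ z) ↑T).toReal = ∑ x ∈ T, q z x := by
        rw [meas_finset_eq_sum _ T, ENNReal.toReal_sum (fun x _ => measure_ne_top _ _)]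
      have hDK : D z / K ≤ ((κ z) ↑T).toReal := by
        rw [hTval]
        have h1 : D z / K ≤ 1 - q z x₀ := by
          rw [div_le_iff₀ hKpos]
          linarith [hDle]
        linarith
      calc ENNReal.ofReal (D z / K) ≤ ENNReal.ofReal ((κ z) ↑T).toReal :=
            ENNReal.ofReal_le_ofReal hDK
        _ = (κ z) ↑T := ENNReal.ofReal_toReal (measure_ne_top _ _)
    calc ENNReal.ofReal (ε ^ 2 * V / K) * ENNReal.ofReal (D z)
        = ENNReal.ofReal (ε ^ 2 * V) * ENNReal.ofReal (D z / K) := by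
          rw [← ENNReal.ofReal_mul (by positivity), ← ENNReal.ofReal_mul (by positivity)]
          congr 1
          ring
      _ ≤ ENNReal.ofReal (ε ^ 2 * V) * (κ z) ↑T :=
          mul_le_mul_right hstep2 _
      _ ≤ ∫⁻ x, F (z, x) ∂κ z := hstep1
  -- integrate the bound
  have hDlint : ∫⁻ z, ENNReal.ofReal (D z) ∂ρ = ENNReal.ofReal (∫ z, D z ∂ρ) :=
    (ofReal_integral_eq_lintegral_ofReal hDint (ae_of_all _ hD0)).symm
  have hmain : ENNReal.ofReal (ε ^ 2 * V / K * ∫ z, D z ∂ρ) ≤ ENNReal.ofReal m := by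
    calc ENNReal.ofReal (ε ^ 2 * V / K * ∫ z, D z ∂ρ)
        = ENNReal.ofReal (ε ^ 2 * V / K) * ENNReal.ofReal (∫ z, D z ∂ρ) :=
          ENNReal.ofReal_mul (by positivity)
      _ = ∫⁻ z, ENNReal.ofReal (ε ^ 2 * V / K) * ENNReal.ofReal (D z) ∂ρ := by
          rw [lintegral_const_mul _ hDmeas.ennreal_ofReal, hDlint]
      _ ≤ ∫⁻ z, ∫⁻ x, F (z, x) ∂κ z ∂ρ := lintegral_mono_ae hz_bound
      _ = ENNReal.ofReal m := hlhs.symm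
  have hDbound : ∫ z, D z ∂ρ ≤ K * nuScalar μ X Z / ε ^ 2 := by
    have h1 : ε ^ 2 * V / K * ∫ z, D z ∂ρ ≤ m :=
      (ENNReal.ofReal_le_ofReal_iff hm0).1 hmain
    have hV : 0 < V := hvar
    have hVne : V ≠ 0 := hV.ne'
    have hKne : (K:ℝ) ≠ 0 := hKpos.ne'
    have hεne : ε ≠ 0 := hε.ne'
    rw [hnu]
    have h2 : ∫ z, D z ∂ρ ≤ m * K / (ε ^ 2 * V) := by
      rw [le_div_iff₀ (by positivity)]
      calc (∫ z, D z ∂ρ) * (ε ^ 2 * V) = (ε ^ 2 * V / K * ∫ z, D z ∂ρ) * K := by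
            field_simp
        _ ≤ m * K := mul_le_mul_of_nonneg_right h1 hKpos.le
    calc ∫ z, D z ∂ρ ≤ m * K / (ε ^ 2 * V) := h2
      _ = ↑K * (m / V) / ε ^ 2 := by field_simp
  -- entropy bound and conclusion
  have hHle : ∀ z, (∑ x ∈ S, Real.negMulLog (q z x)) ≤
      2 * K * (Real.sqrt (Real.sqrt δ) + D z / δ) := by
    intro z
    have h1 : ∀ x ∈ S, Real.negMulLog (q z x) ≤ 2 * Real.sqrt (Real.sqrt (D z)) := by
      intro x hx
      refine aux_negMulLog_le (hq0 z x) (hq1 z x) ?_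
      exact Finset.single_le_sum (f := fun y => q z y * (1 - q z y))
        (fun y _ => mul_nonneg (hq0 z y) (by linarith [hq1 z y])) hx
    have h2 : Real.sqrt (Real.sqrt (D z)) ≤ Real.sqrt (Real.sqrt δ) + D z / δ :=
      aux_split (hD0 z) (hD1 z) hδ
    calc (∑ x ∈ S, Real.negMulLog (q z x))
        ≤ ∑ _x ∈ S, 2 * Real.sqrt (Real.sqrt (D z)) := Finset.sum_le_sum h1
      _ = S.card * (2 * Real.sqrt (Real.sqrt (D z))) := by
          rw [Finset.sum_const, nsmul_eq_mul]
      _ ≤ K * (2 * Real.sqrt (Real.sqrt (D z))) := by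
          have h3 : (S.card : ℝ) ≤ K := by exact_mod_cast hK
          have h4 : 0 ≤ 2 * Real.sqrt (Real.sqrt (D z)) := by positivity
          nlinarith
      _ = 2 * K * Real.sqrt (Real.sqrt (D z)) := by ring
      _ ≤ 2 * K * (Real.sqrt (Real.sqrt δ) + D z / δ) := by nlinarith [h2]
  have hHint : Integrable (fun z => ∑ x ∈ S, Real.negMulLog (q z x)) ρ := by
    refine (integrable_const ((2:ℝ) * K)).mono'
      ((Finset.measurable_sum _ fun x _ =>
        Real.continuous_negMulLog.measurable.comp (hqmeas x)).aestronglyMeasurable)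
      (ae_of_all _ fun z => ?_)
    rw [Real.norm_eq_abs, abs_of_nonneg (Finset.sum_nonneg fun x _ =>
      Real.negMulLog_nonneg (hq0 z x) (hq1 z x))]
    have h1 : ∀ x ∈ S, Real.negMulLog (q z x) ≤ 2 := by
      intro x hx
      have := aux_negMulLog_le (hq0 z x) (hq1 z x)
        (b := 1) (by nlinarith [hq0 z x, hq1 z x])
      simpa using this
    calc (∑ x ∈ S, Real.negMulLog (q z x)) ≤ ∑ _x ∈ S, (2:ℝ) := Finset.sum_le_sum h1
      _ = S.card * 2 := by rw [Finset.sum_const, nsmul_eq_mul]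
      _ ≤ 2 * K := by
          have : (S.card : ℝ) ≤ K := by exact_mod_cast hK
          nlinarith
  have hRHSint : Integrable (fun z => 2 * (K:ℝ) * (Real.sqrt (Real.sqrt δ) + D z / δ)) ρ :=
    ((integrable_const _).add (hDint.div_const δ)).const_mul _
  calc finCondEntropy μ X Z S
      = ∫ z, ∑ x ∈ S, Real.negMulLog (q z x) ∂ρ := rfl
    _ ≤ ∫ z, 2 * K * (Real.sqrt (Real.sqrt δ) + D z / δ) ∂ρ :=
        integral_mono hHint hRHSint hHle
    _ = 2 * K * (Real.sqrt (Real.sqrt δ) + (∫ z, D z ∂ρ) / δ) := by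
        rw [integral_const_mul, integral_add (integrable_const _) (hDint.div_const δ),
          integral_const, integral_div]
        simp
    _ ≤ 2 * K * (Real.sqrt (Real.sqrt δ) + (K * nuScalar μ X Z / ε ^ 2) / δ) := by
        gcongr
    _ = 2 * K * Real.sqrt (Real.sqrt δ) + 2 * K * K / (δ * ε ^ 2) * nuScalar μ X Z := by
        field_simp

end Key


/-- Theorem 2 of the paper. If `ν(Xₙ|Zₙ) → 0` and the points of the
standardized supports `𝒳̆ₙ` of `X̆ₙ = Xₙ · V[Xₙ]^{-1/2}` are uniformly separated
(`ε* = inf_n ε*ₙ > 0`), then `H(Xₙ|Zₙ) → 0` and hence `H(Xₙ) − I(Xₙ;Zₙ) → 0`. -/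
theorem stmt_1
    {Ω : Type*} [MeasurableSpace Ω] (μ : Measure Ω) [IsProbabilityMeasure μ]
    (X Z : ℕ → Ω → ℝ) (S : ℕ → Finset ℝ) (K : ℕ)
    (hXmeas : ∀ n, Measurable (X n)) (hZmeas : ∀ n, Measurable (Z n))
    -- the support of `Xₙ` is the finite set `𝒳ₙ = S n`, with `2 ≤ |𝒳ₙ| ≤ K`
    (hcard : ∀ n, 2 ≤ (S n).card) (hK : ∀ n, (S n).card ≤ K)
    (hsupp : ∀ n, μ (X n ⁻¹' ↑(S n)) = 1)
    (hatom : ∀ n, ∀ x ∈ S n, μ (X n ⁻¹' {x}) ≠ 0)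
    -- `Xₙ` has finite positive variance
    (hXL2 : ∀ n, MemLp (X n) 2 μ) (hXvar : ∀ n, 0 < variance (X n) μ)
    -- `ε* = inf_n ε*ₙ > 0`: any two distinct points of the standardized support
    -- `𝒳̆ₙ = { x / V[Xₙ]^{1/2} : x ∈ 𝒳ₙ }` are separated by at least `2 ε*`
    (hsep : ∃ ε : ℝ, 0 < ε ∧ ∀ n, ∀ x ∈ S n, ∀ y ∈ S n, x ≠ y →
      2 * ε ≤ |x / Real.sqrt (variance (X n) μ) - y / Real.sqrt (variance (X n) μ)|)
    -- `ν(Xₙ|Zₙ) → 0`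
    (hnu : Tendsto (fun n => nuScalar μ (X n) (Z n)) atTop (nhds 0)) :
    Tendsto (fun n => finCondEntropy μ (X n) (Z n) (S n)) atTop (nhds 0) ∧
    Tendsto (fun n => finEntropy μ (X n) (S n) - finMutualInfo μ (X n) (Z n) (S n))
      atTop (nhds 0) := by
  obtain ⟨ε, hε, hsepall⟩ := hsep
  have hK2 : 2 ≤ K := le_trans (hcard 0) (hK 0)
  have hKpos : (0:ℝ) < K := by exact_mod_cast (by omega : 0 < K)
  have htend : Tendsto (fun n => finCondEntropy μ (X n) (Z n) (S n)) atTop (nhds 0) := by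
    rw [NormedAddCommGroup.tendsto_nhds_zero]
    intro η hη
    set t := η / (8 * K) with htdef
    have ht : 0 < t := by positivity
    set δ := t ^ 4 with hδdef
    have hδ : 0 < δ := by positivity
    have hroot : Real.sqrt (Real.sqrt δ) = t := by
      rw [hδdef, show t ^ 4 = (t ^ 2) ^ 2 by ring, Real.sqrt_sq (by positivity),
        Real.sqrt_sq ht.le]
    have hcoef : 0 < 2 * (K:ℝ) * K / (δ * ε ^ 2) := by positivity
    set c := (η / 2) / (2 * K * K / (δ * ε ^ 2)) with hcdef
    have hc : 0 < c := by positivity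
    filter_upwards [hnu.eventually_lt_const hc] with n hn
    have hSne : (S n).Nonempty := Finset.card_pos.1 (by have := hcard n; omega)
    have hb := key_bound μ (X n) (Z n) (S n) (hXmeas n) (hZmeas n) hSne (hK n) (hsupp n)
      (hXL2 n) (hXvar n) hε (hsepall n) hδ
    have h0 := finCondEntropy_nonneg μ (X n) (Z n) (S n)
    rw [Real.norm_eq_abs, abs_of_nonneg h0]
    have h2 : 2 * (K:ℝ) * K / (δ * ε ^ 2) * nuScalar μ (X n) (Z n) < η / 2 := by
      have h3 := mul_lt_mul_of_pos_left hn hcoef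
      have h4 : 2 * (K:ℝ) * K / (δ * ε ^ 2) * c = η / 2 := by
        rw [hcdef, mul_comm, div_mul_cancel₀ _ hcoef.ne']
      linarith
    have h1 : 2 * (K:ℝ) * Real.sqrt (Real.sqrt δ) = η / 4 := by
      rw [hroot, htdef]
      field_simp
      ring
    calc finCondEntropy μ (X n) (Z n) (S n)
        ≤ 2 * K * Real.sqrt (Real.sqrt δ)
          + 2 * K * K / (δ * ε ^ 2) * nuScalar μ (X n) (Z n) := hb
      _ < η := by rw [h1]; linarith
  refine ⟨htend, ?_⟩
  have heq : (fun n => finEntropy μ (X n) (S n) - finMutualInfo μ (X n) (Z n) (S n)) =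
      fun n => finCondEntropy μ (X n) (Z n) (S n) := by
    funext n
    simp [finMutualInfo, sub_sub_cancel]
  rw [heq]
  exact htend
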